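/- For all integers x ≥ 1 and m ≥ x+2, twice the number of codewords of C(m,x) whose x+2 leftmost bits are 0 followed by x+1 ones (i.e., codewords starting with 0 1^{x+1} from the left, Group 2) is N(m−x−1,x). -/

import Mathlib

/-- `noForbidden m x c` says the binary word `c = (c_{m-1}, …, c_0)` contains no contiguous
subword of the form `0 1^y 0` or `1 0^y 1` for any `1 ≤ y ≤ x`. -/
def noForbidden (m x : ℕ) (c : Fin m → Bool) : Prop :=
  ∀ j y : ℕ, 1 ≤ y → y ≤ x → (h : j + y + 1 < m) →
    ¬ ((∀ k, 1 ≤ k → (hk : k ≤ y) → c ⟨j + k, by omega⟩ = ! c ⟨j, by omega⟩) ∧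
        c ⟨j + y + 1, h⟩ = c ⟨j, by omega⟩)

/-- `N(m, x)`: the cardinality of the LOCO code `C(m, x)`. -/
noncomputable def locoN (m x : ℕ) : ℕ := Nat.card {c : Fin m → Bool // noForbidden m x c}

/-- `N(k, x)` extended to integer `k` by the convention `N(k, x) = 2` for `k ≤ 1`. -/
noncomputable def Nex (k : ℤ) (x : ℕ) : ℤ := if k ≤ 1 then 2 else (locoN k.toNat x : ℤ)

/-- Strict lexicographic order on binary words, comparing bits from `c_{m-1}`
(most significant) down to `c_0`, with `0 < 1`. -/
def lexLt (m : ℕ) (d c : Fin m → Bool) : Prop :=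
  ∃ i : Fin m, d i = false ∧ c i = true ∧ ∀ j : Fin m, (i : ℕ) < (j : ℕ) → d j = c j

/-- The index `g(m, x, c)` of a codeword: the number of codewords of `C(m, x)` that
precede `c` in lexicographic order. -/
noncomputable def locoIdx (m x : ℕ) (c : Fin m → Bool) : ℕ :=
  Nat.card {d : Fin m → Bool // noForbidden m x d ∧ lexLt m d c}

/-! ### Auxiliary machinery -/

/-- Restriction of a word of length `m` to its `n` lowest bits. -/
def restrW (m n : ℕ) (hnm : n ≤ m) (c : Fin m → Bool) : Fin n → Bool :=
  fun i => c ⟨i, lt_of_lt_of_le i.isLt hnm⟩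

/-- Extension of a word of length `n` to length `m`: the new high bits are `1`
except the very top bit `m-1`, which is `0`. -/
def extW (m n : ℕ) (d : Fin n → Bool) : Fin m → Bool :=
  fun i => if h : (i : ℕ) < n then d ⟨i, h⟩ else decide ((i : ℕ) < m - 1)

lemma noForbidden_flip {m x : ℕ} {c : Fin m → Bool} (h : noForbidden m x c) :
    noForbidden m x (fun i => ! c i) := by
  intro j y hy1 hyx hlt hcond
  refine h j y hy1 hyx hlt ⟨fun k hk1 hk2 => ?_, ?_⟩
  · have h1 := hcond.1 k hk1 hk2
    simp only [Bool.not_not] at h1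
    cases hb : c ⟨j, by omega⟩ <;> simp [hb] at h1 ⊢ <;> simp [h1]
  · have h2 := hcond.2
    simp only at h2
    cases hb : c ⟨j, by omega⟩ <;> simp [hb] at h2 ⊢ <;> simp [h2]

lemma noForbidden_restr {m n x : ℕ} (hnm : n ≤ m) {c : Fin m → Bool}
    (h : noForbidden m x c) : noForbidden n x (restrW m n hnm c) := by
  intro j y hy1 hyx hlt hcond
  refine h j y hy1 hyx (by omega) ⟨fun k hk1 hk2 => ?_, ?_⟩
  · exact hcond.1 k hk1 hk2
  · exact hcond.2

lemma noForbidden_ext {m x : ℕ} (hx : 1 ≤ x) (hm : x + 2 ≤ m)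
    {d : Fin (m - x - 1) → Bool} (hd : noForbidden (m - x - 1) x d)
    (htop : d ⟨m - x - 2, by omega⟩ = true) :
    noForbidden m x (extW m (m - x - 1) d) := by
  intro j y hy1 hyx hlt hcond
  by_cases hcase : j + y + 1 < m - x - 1
  · refine hd j y hy1 hyx hcase ⟨fun k hk1 hk2 => ?_, ?_⟩
    · have h1 := hcond.1 k hk1 hk2
      simp only [extW, dif_pos (show j + k < m - x - 1 by omega),
        dif_pos (show j < m - x - 1 by omega)] at h1
      exact h1
    · have h2 := hcond.2
      simp only [extW, dif_pos (show j + y + 1 < m - x - 1 by omega),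
        dif_pos (show j < m - x - 1 by omega)] at h2
      exact h2
  · -- boundary cases
    by_cases hend : j + y + 1 = m - 1
    · -- the window ends at the top bit `0`, so `c_j = 0`
      have hjlow : j < m - x - 1 := by
        by_contra hjn
        have h2 := hcond.2
        simp only [extW, dif_neg (show ¬ j + y + 1 < m - x - 1 by omega),
          dif_neg (show ¬ j < m - x - 1 by omega)] at h2
        rw [decide_eq_decide] at h2
        omega
      -- then j = m - x - 2 since j ≥ m - 2 - y ≥ m - 2 - x
      have h2 := hcond.2
      simp only [extW, dif_neg (show ¬ j + y + 1 < m - x - 1 by omega),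
        dif_pos hjlow] at h2
      rw [show (decide (j + y + 1 < m - 1)) = false by
          simp only [decide_eq_false_iff_not]; omega] at h2
      rw [show (⟨j, hjlow⟩ : Fin (m - x - 1)) = ⟨m - x - 2, by omega⟩ from
          Fin.ext (show j = m - x - 2 by omega)] at h2
      rw [htop] at h2
      exact absurd h2 (by simp)
    · -- m - x - 1 ≤ j + y + 1 ≤ m - 2 : the end bit is `1`, so c_j = 1 and the
      -- middle bits are 0, but position j + y carries a `1`
      have hend1 : extW m (m - x - 1) d ⟨j + y + 1, hlt⟩ = true := by
        simp only [extW, dif_neg (show ¬ j + y + 1 < m - x - 1 by omega)]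
        rw [decide_eq_true_eq]; omega
      have hcj : extW m (m - x - 1) d ⟨j, by omega⟩ = true := by
        rw [hcond.2] at hend1; exact hend1
      have hmid := hcond.1 y hy1 le_rfl
      rw [hcj] at hmid
      simp only [Bool.not_true] at hmid
      -- hmid : extW m (m-x-1) d ⟨j + y, _⟩ = false
      by_cases hjy : j + y < m - x - 1
      · simp only [extW, dif_pos hjy] at hmid
        rw [show (⟨j + y, hjy⟩ : Fin (m - x - 1)) = ⟨m - x - 2, by omega⟩ from
            Fin.ext (show j + y = m - x - 2 by omega)] at hmid
        rw [htop] at hmid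
        exact absurd hmid (by simp)
      · simp only [extW, dif_neg hjy] at hmid
        rw [show (decide (j + y < m - 1)) = true by
            rw [decide_eq_true_eq]; omega] at hmid
        exact absurd hmid (by simp)

lemma restrW_top {m x : ℕ} (hx : 1 ≤ x) (hm : x + 2 ≤ m) {c : Fin m → Bool}
    (h1 : ∀ k, 1 ≤ k → k ≤ x + 1 → c ⟨m - 1 - k, Nat.lt_of_le_of_lt (Nat.sub_le _ k) (Nat.sub_lt (by omega : 0 < m) Nat.one_pos)⟩ = true) :
    restrW m (m - x - 1) (by omega) c ⟨m - x - 2, by omega⟩ = true := by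
  have := h1 (x + 1) (by omega) le_rfl
  show c ⟨m - x - 2, by omega⟩ = true
  rw [show (⟨m - x - 2, by omega⟩ : Fin m) = ⟨m - 1 - (x + 1), by omega⟩ from
      Fin.ext (show m - x - 2 = m - 1 - (x + 1) by omega)]
  exact this

lemma extW_top {m x : ℕ} (hx : 1 ≤ x) (hm : x + 2 ≤ m) (d : Fin (m - x - 1) → Bool) :
    extW m (m - x - 1) d ⟨m - 1, Nat.sub_lt (by omega : 0 < m) Nat.one_pos⟩ = false := by
  simp only [extW, dif_neg (show ¬ m - 1 < m - x - 1 by omega)]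
  simp only [decide_eq_false_iff_not]; omega

lemma extW_ones {m x : ℕ} (hx : 1 ≤ x) (hm : x + 2 ≤ m) (d : Fin (m - x - 1) → Bool)
    (htop : d ⟨m - x - 2, by omega⟩ = true) :
    ∀ k, 1 ≤ k → k ≤ x + 1 → extW m (m - x - 1) d ⟨m - 1 - k, Nat.lt_of_le_of_lt (Nat.sub_le _ k) (Nat.sub_lt (by omega : 0 < m) Nat.one_pos)⟩ = true := by
  intro k hk1 hk2
  by_cases hk : k ≤ x
  · simp only [extW, dif_neg (show ¬ m - 1 - k < m - x - 1 by omega)]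
    rw [decide_eq_true_eq]; omega
  · have hkx : k = x + 1 := by omega
    simp only [extW, dif_pos (show m - 1 - k < m - x - 1 by omega)]
    rw [show (⟨m - 1 - k, by omega⟩ : Fin (m - x - 1)) = ⟨m - x - 2, by omega⟩ from
        Fin.ext (show m - 1 - k = m - x - 2 by omega)]
    exact htop

lemma extW_restrW {m x : ℕ} (hx : 1 ≤ x) (hm : x + 2 ≤ m) {c : Fin m → Bool}
    (h0 : c ⟨m - 1, Nat.sub_lt (by omega : 0 < m) Nat.one_pos⟩ = false)
    (h1 : ∀ k, 1 ≤ k → k ≤ x + 1 → c ⟨m - 1 - k, Nat.lt_of_le_of_lt (Nat.sub_le _ k) (Nat.sub_lt (by omega : 0 < m) Nat.one_pos)⟩ = true) :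
    extW m (m - x - 1) (restrW m (m - x - 1) (by omega) c) = c := by
  funext i
  by_cases hi : (i : ℕ) < m - x - 1
  · simp only [extW, dif_pos hi, restrW]
  · simp only [extW, dif_neg hi]
    by_cases hi1 : (i : ℕ) < m - 1
    · have := h1 (m - 1 - (i : ℕ)) (by omega) (by omega)
      rw [show (⟨m - 1 - (m - 1 - (i : ℕ)), by omega⟩ : Fin m) = i from
          Fin.ext (show m - 1 - (m - 1 - (i : ℕ)) = (i : ℕ) by omega)] at this
      rw [this, decide_eq_true_eq]
      exact hi1
    · rw [show i = ⟨m - 1, by omega⟩ from Fin.ext (show (i : ℕ) = m - 1 by omega),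
        h0]
      simp only [decide_eq_false_iff_not]; omega

lemma restrW_extW {m n : ℕ} (hnm : n ≤ m) (d : Fin n → Bool) :
    restrW m n hnm (extW m n d) = d := by
  funext i
  show (if h : (i : ℕ) < n then d ⟨(i : ℕ), h⟩ else decide ((i : ℕ) < m - 1)) = d i
  rw [dif_pos i.isLt]

lemma card_split {α : Type*} [Finite α] (Q R : α → Prop) :
    Nat.card {a // Q a} = Nat.card {a // Q a ∧ R a} + Nat.card {a // Q a ∧ ¬ R a} := by
  classical
  rw [← Nat.card_sum]
  exact Nat.card_congr (((Equiv.sumCongr (Equiv.subtypeSubtypeEquivSubtypeInter Q R)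
    (Equiv.subtypeSubtypeEquivSubtypeInter Q fun a => ¬ R a)).symm.trans
    (Equiv.sumCompl fun s : {a // Q a} => R s.1))).symm

lemma locoN_one (x : ℕ) : locoN 1 x = 2 := by
  unfold locoN
  have h : ∀ c : Fin 1 → Bool, noForbidden 1 x c := by
    intro c j y hy1 hyx h
    omega
  rw [Nat.card_congr (Equiv.subtypeUnivEquiv h)]
  simp [Nat.card_eq_fintype_card]

/-- The key counting identity in ℕ. -/
lemma loco_group2_card_nat (m x : ℕ) (hx : 1 ≤ x) (hm : x + 2 ≤ m) :
    2 * Nat.card {c : Fin m → Bool // noForbidden m x c ∧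
          c ⟨m - 1, Nat.sub_lt (by omega : 0 < m) Nat.one_pos⟩ = false ∧
          ∀ k, 1 ≤ k → k ≤ x + 1 → c ⟨m - 1 - k, Nat.lt_of_le_of_lt (Nat.sub_le _ k) (Nat.sub_lt (by omega : 0 < m) Nat.one_pos)⟩ = true}
      = locoN (m - x - 1) x := by
  -- step 1: Group 2 ≃ words of length m - x - 1 with top bit 1
  have e1 : {c : Fin m → Bool // noForbidden m x c ∧
          c ⟨m - 1, Nat.sub_lt (by omega : 0 < m) Nat.one_pos⟩ = false ∧
          ∀ k, 1 ≤ k → k ≤ x + 1 → c ⟨m - 1 - k, Nat.lt_of_le_of_lt (Nat.sub_le _ k) (Nat.sub_lt (by omega : 0 < m) Nat.one_pos)⟩ = true}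
      ≃ {d : Fin (m - x - 1) → Bool // noForbidden (m - x - 1) x d ∧
          d ⟨m - x - 2, by omega⟩ = true} :=
    { toFun := fun c => ⟨restrW m (m - x - 1) (by omega) c.1,
        noForbidden_restr (by omega) c.2.1, restrW_top hx hm c.2.2.2⟩
      invFun := fun d => ⟨extW m (m - x - 1) d.1,
        noForbidden_ext hx hm d.2.1 d.2.2, extW_top hx hm d.1,
        extW_ones hx hm d.1 d.2.2⟩
      left_inv := fun c => Subtype.ext (extW_restrW hx hm c.2.2.1 c.2.2.2)
      right_inv := fun d => Subtype.ext (restrW_extW (by omega) d.1) }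
  -- step 3: bit-flip bijection between the two halves
  have e2 : {d : Fin (m - x - 1) → Bool // noForbidden (m - x - 1) x d ∧
          d ⟨m - x - 2, by omega⟩ = true}
      ≃ {d : Fin (m - x - 1) → Bool // noForbidden (m - x - 1) x d ∧
          ¬ d ⟨m - x - 2, by omega⟩ = true} :=
    { toFun := fun d => ⟨fun i => ! d.1 i, noForbidden_flip d.2.1, by
        simp [d.2.2]⟩
      invFun := fun d => ⟨fun i => ! d.1 i, noForbidden_flip d.2.1, by
        have := d.2.2
        simp only [Bool.not_eq_true] at this
        simp [this]⟩
      left_inv := fun d => Subtype.ext (by funext i; simp)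
      right_inv := fun d => Subtype.ext (by funext i; simp) }
  -- step 2: split the full code of length m - x - 1 by the top bit
  have split : Nat.card {d : Fin (m - x - 1) → Bool // noForbidden (m - x - 1) x d}
      = Nat.card {d : Fin (m - x - 1) → Bool // noForbidden (m - x - 1) x d ∧
          d ⟨m - x - 2, by omega⟩ = true}
        + Nat.card {d : Fin (m - x - 1) → Bool // noForbidden (m - x - 1) x d ∧
          ¬ d ⟨m - x - 2, by omega⟩ = true} :=
    card_split _ _
  have hflip := Nat.card_congr e2
  rw [Nat.card_congr e1]
  unfold locoN
  rw [split, ← hflip, two_mul]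

theorem loco_group2_card (m x : ℕ) (hx : 1 ≤ x) (hm : x + 2 ≤ m) :
    2 * (Nat.card {c : Fin m → Bool // noForbidden m x c ∧
          c ⟨m - 1, by omega⟩ = false ∧
          ∀ k, 1 ≤ k → k ≤ x + 1 → c ⟨m - 1 - k, by omega⟩ = true} : ℤ)
      = Nex ((m : ℤ) - (x : ℤ) - 1) x := by
  by_cases hsmall : (m : ℤ) - (x : ℤ) - 1 ≤ 1
  · have hn1 : m - x - 1 = 1 := by omega
    have key := loco_group2_card_nat m x hx hm
    rw [hn1, locoN_one] at key
    rw [Nex, if_pos hsmall]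
    exact_mod_cast key
  · have htn : ((m : ℤ) - (x : ℤ) - 1).toNat = m - x - 1 := by omega
    have key := loco_group2_card_nat m x hx hm
    rw [Nex, if_neg hsmall, htn]
    exact_mod_cast key
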